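/- For H the set of even integers ≥ 2, the supremum of λ over all nonnegative trigonometric polynomials φ(t) = 1 + λ cos(2πt) + ∑_{k∈H} c_k cos(2πkt) equals π/2. -/

import Mathlib

open Real intervalIntegral

noncomputable def cosM (m : ℕ) : ℝ → ℝ := fun θ => Real.cos (2 * m * θ)

noncomputable def Rspan : Submodule ℝ (ℝ → ℝ) := Submodule.span ℝ (Set.range cosM)

lemma cos_mul_cos' (A B : ℝ) : Real.cos A * Real.cos B = (Real.cos (A + B) + Real.cos (A - B)) / 2 := by
  rw [Real.cos_add, Real.cos_sub]; ring

lemma mem_cosM (m : ℕ) : cosM m ∈ Rspan := Submodule.subset_span ⟨m, rfl⟩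

lemma mul_cos_mem {f : ℝ → ℝ} (hf : f ∈ Rspan) :
    (fun θ => f θ * Real.cos (2 * θ)) ∈ Rspan := by
  induction hf using Submodule.span_induction with
  | mem x hx =>
      obtain ⟨m, rfl⟩ := hx
      rcases Nat.eq_zero_or_pos m with hm | hm
      · subst hm
        have : (fun θ => cosM 0 θ * Real.cos (2 * θ)) = cosM 1 := by
          funext θ; simp [cosM]
        rw [this]; exact mem_cosM 1
      · have : (fun θ => cosM m θ * Real.cos (2 * θ))
            = (1/2 : ℝ) • cosM (m+1) + (1/2 : ℝ) • cosM (m-1) := by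
          funext θ
          simp only [cosM, Pi.add_apply, Pi.smul_apply, smul_eq_mul]
          rw [cos_mul_cos']
          have h1 : 2 * (m:ℝ) * θ + 2 * θ = 2 * ((m:ℕ)+1 : ℕ) * θ := by push_cast; ring
          have h2 : 2 * (m:ℝ) * θ - 2 * θ = 2 * ((m - 1 : ℕ) : ℝ) * θ := by
            have : ((m - 1 : ℕ) : ℝ) = (m : ℝ) - 1 := by
              push_cast [Nat.cast_sub hm]; ring
            rw [this]; ring
          rw [h1, h2]; push_cast; ring
        rw [this]
        exact Submodule.add_mem _ (Submodule.smul_mem _ _ (mem_cosM _))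
          (Submodule.smul_mem _ _ (mem_cosM _))
  | zero =>
      have : (fun θ : ℝ => (0 : ℝ → ℝ) θ * Real.cos (2 * θ)) = (0 : ℝ → ℝ) := by
        funext θ; simp
      rw [this]; exact Submodule.zero_mem Rspan
  | add x y _ _ hx hy =>
      have : (fun θ => (x + y) θ * Real.cos (2 * θ))
          = (fun θ => x θ * Real.cos (2 * θ)) + (fun θ => y θ * Real.cos (2 * θ)) := by
        funext θ; simp [add_mul]
      rw [this]; exact Submodule.add_mem _ hx hy
  | smul a x _ hx =>
      have : (fun θ => (a • x) θ * Real.cos (2 * θ))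
          = a • (fun θ => x θ * Real.cos (2 * θ)) := by
        funext θ; simp [mul_assoc]
      rw [this]; exact Submodule.smul_mem _ _ hx

lemma pow_cos_mem (n : ℕ) : (fun θ => (Real.cos (2 * θ))^n) ∈ Rspan := by
  induction n with
  | zero =>
      have : (fun θ : ℝ => (Real.cos (2 * θ))^0) = cosM 0 := by
        funext θ; simp [cosM]
      rw [this]; exact mem_cosM 0
  | succ n ih =>
      have : (fun θ => (Real.cos (2 * θ))^(n+1))
          = (fun θ => (Real.cos (2 * θ))^n * Real.cos (2 * θ)) := by
        funext θ; ring
      rw [this]; exact mul_cos_mem ih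

lemma poly_cos_mem (p : Polynomial ℝ) :
    (fun θ => p.eval (Real.cos (2 * θ))) ∈ Rspan := by
  have : (fun θ => p.eval (Real.cos (2 * θ)))
      = ∑ i ∈ Finset.range (p.natDegree + 1),
          p.coeff i • (fun θ => (Real.cos (2 * θ))^i) := by
    funext θ
    rw [Polynomial.eval_eq_sum_range]
    simp [Finset.sum_apply]
  rw [this]
  exact Submodule.sum_mem _ fun i _ => Submodule.smul_mem _ _ (pow_cos_mem i)

lemma rep_poly (p : Polynomial ℝ) :
    ∃ c : ℕ →₀ ℝ, ∀ θ : ℝ,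
      p.eval (Real.cos (2 * θ)) = ∑ m ∈ c.support, c m * Real.cos (2 * m * θ) := by
  have h := poly_cos_mem p
  rw [Rspan, Finsupp.mem_span_range_iff_exists_finsupp] at h
  obtain ⟨c, hc⟩ := h
  refine ⟨c, fun θ => ?_⟩
  have := congrFun hc θ
  rw [← this]
  rw [Finsupp.sum]
  simp [Finset.sum_apply, cosM]

lemma int_cos (a l r : ℝ) (ha : a ≠ 0) :
    ∫ t in l..r, Real.cos (a * t) = (Real.sin (a * r) - Real.sin (a * l)) / a := by
  rw [intervalIntegral.integral_comp_mul_left (fun x => Real.cos x) ha, integral_cos]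
  simp [smul_eq_mul]; ring

-- integral over one period
lemma int_cos_period (m : ℕ) (hm : 1 ≤ m) :
    ∫ θ in (0:ℝ)..(2*π), Real.cos (2 * m * θ) = 0 := by
  have hm' : (2 * m : ℝ) ≠ 0 := by positivity
  rw [int_cos _ _ _ hm']
  have h1 : (2 * (m:ℝ)) * (2 * π) = ((4 * m : ℕ) : ℝ) * π := by push_cast; ring
  rw [h1, Real.sin_nat_mul_pi]
  simp

lemma int_abs_cos : ∫ θ in (0:ℝ)..(2*π), |Real.cos θ| = 4 := by
  have pi_pos := Real.pi_pos
  have h1 : ∫ θ in (0:ℝ)..(π/2), |Real.cos θ| = 1 := by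
    rw [intervalIntegral.integral_congr (g := Real.cos) ?_, integral_cos]
    · simp
    · intro x hx
      rw [Set.uIcc_of_le (by linarith)] at hx
      exact abs_of_nonneg (Real.cos_nonneg_of_mem_Icc ⟨by linarith [hx.1], hx.2⟩)
  have h2 : ∫ θ in (π/2:ℝ)..(3*π/2), |Real.cos θ| = 2 := by
    rw [intervalIntegral.integral_congr (g := fun x => -Real.cos x) ?_]
    · rw [intervalIntegral.integral_neg, integral_cos]
      have : Real.sin (3*π/2) = -1 := by
        have : (3*π/2 : ℝ) = π + π/2 := by ring
        rw [this, add_comm, Real.sin_add_pi, Real.sin_pi_div_two]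
      rw [this, Real.sin_pi_div_two]; ring
    · intro x hx
      rw [Set.uIcc_of_le (by linarith)] at hx
      refine abs_of_nonpos (Real.cos_nonpos_of_pi_div_two_le_of_le hx.1 ?_)
      linarith [hx.2]
  have h3 : ∫ θ in (3*π/2:ℝ)..(2*π), |Real.cos θ| = 1 := by
    rw [intervalIntegral.integral_congr (g := Real.cos) ?_, integral_cos]
    · have : Real.sin (3*π/2) = -1 := by
        have : (3*π/2 : ℝ) = π + π/2 := by ring
        rw [this, add_comm, Real.sin_add_pi, Real.sin_pi_div_two]
      rw [this, Real.sin_two_pi]; ring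
    · intro x hx
      rw [Set.uIcc_of_le (by linarith)] at hx
      refine abs_of_nonneg ?_
      rw [← Real.cos_sub_two_pi]
      exact Real.cos_nonneg_of_neg_pi_div_two_le_of_le (by linarith [hx.1]) (by linarith [hx.2])
  have i1 : IntervalIntegrable (fun θ => |Real.cos θ|) MeasureTheory.volume 0 (π/2) :=
    (Real.continuous_cos.abs).intervalIntegrable _ _
  have i2 : IntervalIntegrable (fun θ => |Real.cos θ|) MeasureTheory.volume (π/2) (3*π/2) :=
    (Real.continuous_cos.abs).intervalIntegrable _ _
  have i3 : IntervalIntegrable (fun θ => |Real.cos θ|) MeasureTheory.volume (3*π/2) (2*π) :=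
    (Real.continuous_cos.abs).intervalIntegrable _ _
  rw [← intervalIntegral.integral_add_adjacent_intervals (b := π/2)
      ((Real.continuous_cos.abs).intervalIntegrable _ _)
      ((Real.continuous_cos.abs).intervalIntegrable _ _),
    ← intervalIntegral.integral_add_adjacent_intervals (a := π/2) (b := 3*π/2)
      ((Real.continuous_cos.abs).intervalIntegrable _ _)
      ((Real.continuous_cos.abs).intervalIntegrable _ _),
    h1, h2, h3]
  norm_num

lemma turan_upper {lam : ℝ} {S : Finset ℕ} {c : ℕ → ℝ}
    (hS : ↑S ⊆ {k : ℕ | 2 ≤ k ∧ Even k})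
    (h : ∀ t : ℝ, 0 ≤ 1 + lam * Real.cos (2 * π * t) +
      ∑ k ∈ S, c k * Real.cos (2 * π * k * t)) : lam ≤ π / 2 := by
  have pi_pos := Real.pi_pos
  have hcont : Continuous (fun t : ℝ => 1 + lam * Real.cos (2 * π * t) +
      ∑ k ∈ S, c k * Real.cos (2 * π * k * t)) := by
    apply Continuous.add
    · fun_prop
    · exact continuous_finset_sum _ fun k _ => by fun_prop
  have h0 : (0:ℝ) ≤ ∫ t in (1/4:ℝ)..(3/4), (1 + lam * Real.cos (2 * π * t) +
      ∑ k ∈ S, c k * Real.cos (2 * π * k * t)) :=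
    intervalIntegral.integral_nonneg (by norm_num) (fun t _ => h t)
  have i1 : IntervalIntegrable (fun t : ℝ => 1 + lam * Real.cos (2 * π * t))
      MeasureTheory.volume (1/4) (3/4) := by
    apply Continuous.intervalIntegrable; fun_prop
  have i2 : IntervalIntegrable (fun t : ℝ => ∑ k ∈ S, c k * Real.cos (2 * π * k * t))
      MeasureTheory.volume (1/4) (3/4) := by
    apply Continuous.intervalIntegrable
    exact continuous_finset_sum _ fun k _ => by fun_prop
  rw [intervalIntegral.integral_add i1 i2] at h0
  have e2 : ∫ t in (1/4:ℝ)..(3/4), (∑ k ∈ S, c k * Real.cos (2 * π * k * t)) = 0 := by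
    rw [intervalIntegral.integral_finset_sum (fun k _ => by
      apply Continuous.intervalIntegrable; fun_prop)]
    apply Finset.sum_eq_zero
    intro k hk
    obtain ⟨hk2, j, hj⟩ := hS hk
    have hkne : (2 * π * k : ℝ) ≠ 0 := by
      have : (0:ℝ) < k := by exact_mod_cast Nat.lt_of_lt_of_le Nat.zero_lt_two hk2
      positivity
    have : ∀ t : ℝ, Real.cos (2 * π * k * t) = Real.cos ((2 * π * k) * t) := by
      intro t; ring_nf
    rw [intervalIntegral.integral_const_mul]
    rw [show (fun t : ℝ => Real.cos (2 * π * k * t)) = (fun t : ℝ => Real.cos ((2 * π * k) * t)) by funext t; ring_nf]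
    rw [int_cos _ _ _ hkne]
    have hk' : (k : ℝ) = 2 * (j : ℝ) := by rw [hj]; push_cast; ring
    have hs1 : Real.sin ((2 * π * k) * (3/4)) = 0 := by
      rw [show ((2 * π * k) * (3/4) : ℝ) = ((3 * j : ℕ) : ℝ) * π by rw [hk']; push_cast; ring]
      exact Real.sin_nat_mul_pi _
    have hs2 : Real.sin ((2 * π * k) * (1/4)) = 0 := by
      rw [show ((2 * π * k) * (1/4) : ℝ) = ((j : ℕ) : ℝ) * π by rw [hk']; push_cast; ring]
      exact Real.sin_nat_mul_pi _
    rw [hs1, hs2]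
    simp
  have i3 : IntervalIntegrable (fun _ : ℝ => (1:ℝ)) MeasureTheory.volume (1/4) (3/4) :=
    intervalIntegrable_const
  have i4 : IntervalIntegrable (fun t : ℝ => lam * Real.cos (2 * π * t))
      MeasureTheory.volume (1/4) (3/4) := by
    apply Continuous.intervalIntegrable; fun_prop
  rw [intervalIntegral.integral_add i3 i4, e2] at h0
  have e0 : ∫ _t in (1/4:ℝ)..(3/4), (1:ℝ) = 1/2 := by simp; norm_num
  have e1 : ∫ t in (1/4:ℝ)..(3/4), lam * Real.cos (2 * π * t) = lam * (-1/π) := by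
    rw [intervalIntegral.integral_const_mul]
    rw [show (fun t : ℝ => Real.cos (2 * π * t)) = (fun t : ℝ => Real.cos ((2 * π) * t)) by funext t; ring_nf]
    rw [int_cos _ _ _ (by positivity)]
    have hs1 : Real.sin ((2 * π) * (3/4)) = -1 := by
      rw [show ((2 * π) * (3/4) : ℝ) = π/2 + π by ring, Real.sin_add_pi, Real.sin_pi_div_two]
    have hs2 : Real.sin ((2 * π) * (1/4)) = 1 := by
      rw [show ((2 * π) * (1/4) : ℝ) = π/2 by ring, Real.sin_pi_div_two]
    rw [hs1, hs2]
    ring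
  rw [e0, e1] at h0
  have key : lam / π ≤ 1/2 := by
    have e : lam * (-1/π) = -(lam/π) := by ring
    rw [e] at h0
    linarith
  calc lam = (lam / π) * π := by field_simp
    _ ≤ (1/2) * π := by nlinarith [pi_pos, key]
    _ = π / 2 := by ring

lemma turan_mem (ε : ℝ) (hε : 0 < ε) :
    ∃ lam ∈ {lam : ℝ | ∃ S : Finset ℕ, ↑S ⊆ {k : ℕ | 2 ≤ k ∧ Even k} ∧ ∃ c : ℕ → ℝ,
        ∀ t : ℝ, 0 ≤ 1 + lam * Real.cos (2 * π * t) +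
          ∑ k ∈ S, c k * Real.cos (2 * π * k * t)},
      1 / (2/π + ε) ≤ lam := by
  have pi_pos := Real.pi_pos
  -- approximate sqrt((1+y)/2) by a polynomial
  have hcontf : ContinuousOn (fun y : ℝ => Real.sqrt ((1+y)/2)) (Set.Icc (-1) 1) :=
    (Real.continuous_sqrt.comp (by fun_prop)).continuousOn
  obtain ⟨p, hp⟩ := exists_polynomial_near_of_continuousOn (-1) 1
    (fun y : ℝ => Real.sqrt ((1+y)/2)) hcontf (ε/2) (by positivity)
  have habs : ∀ θ : ℝ, Real.sqrt ((1 + Real.cos (2*θ))/2) = |Real.cos θ| := by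
    intro θ
    rw [Real.cos_two_mul, show (1 + (2*Real.cos θ^2 - 1))/2 = (Real.cos θ)^2 by ring,
      Real.sqrt_sq_eq_abs]
  set g : ℝ → ℝ := fun θ => p.eval (Real.cos (2*θ)) + ε/2 with hg
  have hmem : ∀ θ : ℝ, Real.cos (2*θ) ∈ Set.Icc (-1:ℝ) 1 :=
    fun θ => ⟨Real.neg_one_le_cos _, Real.cos_le_one _⟩
  have hg_lb : ∀ θ : ℝ, |Real.cos θ| ≤ g θ := by
    intro θ
    have := hp _ (hmem θ)
    rw [habs θ] at this
    have := abs_lt.mp this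
    simp only [hg]
    linarith [this.1]
  have hg_ub : ∀ θ : ℝ, g θ ≤ |Real.cos θ| + ε := by
    intro θ
    have := hp _ (hmem θ)
    rw [habs θ] at this
    have := abs_lt.mp this
    simp only [hg]
    linarith [this.2]
  obtain ⟨c, hc⟩ := rep_poly p
  set a0 : ℝ := c 0 + ε/2 with ha0
  -- compute the integral of g
  have hterm : ∀ m : ℕ, (∫ θ in (0:ℝ)..(2*π), c m * Real.cos (2*m*θ))
      = if m = 0 then c 0 * (2*π) else 0 := by
    intro m
    rw [intervalIntegral.integral_const_mul]
    rcases Nat.eq_zero_or_pos m with hm | hm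
    · subst hm
      simp
    · rw [if_neg (by omega), int_cos_period m hm, mul_zero]
  have hsum : (∫ θ in (0:ℝ)..(2*π), ∑ m ∈ c.support, c m * Real.cos (2*m*θ))
      = c 0 * (2*π) := by
    rw [intervalIntegral.integral_finset_sum (fun m _ =>
      (Continuous.intervalIntegrable (by fun_prop) _ _))]
    rw [Finset.sum_congr rfl (fun m _ => hterm m)]
    rw [Finset.sum_ite_eq' c.support 0 (fun _ => c 0 * (2*π))]
    by_cases h0 : 0 ∈ c.support
    · rw [if_pos h0]
    · rw [if_neg h0, Finsupp.notMem_support_iff.mp h0]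
      ring
  have hgcont : Continuous g := ((p.continuous_aeval).comp (by fun_prop)).add continuous_const
  have hgint : (∫ θ in (0:ℝ)..(2*π), g θ) = 2*π*a0 := by
    have e1 : (∫ θ in (0:ℝ)..(2*π), g θ)
        = (∫ θ in (0:ℝ)..(2*π), ((∑ m ∈ c.support, c m * Real.cos (2*m*θ)) + ε/2)) := by
      apply intervalIntegral.integral_congr
      intro θ _
      simp only [hg]
      rw [hc θ]
    rw [e1, intervalIntegral.integral_add (Continuous.intervalIntegrable
      (continuous_finset_sum _ fun m _ => by fun_prop) _ _) intervalIntegrable_const,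
      hsum]
    simp
    rw [ha0]; ring
  have habs_cont : Continuous (fun θ : ℝ => |Real.cos θ|) := Real.continuous_cos.abs
  have h4 : 4 ≤ 2*π*a0 := by
    rw [← hgint, ← int_abs_cos]
    apply intervalIntegral.integral_mono_on (by positivity)
      (habs_cont.intervalIntegrable _ _) (hgcont.intervalIntegrable _ _)
    intro θ _
    exact hg_lb θ
  have h4' : 2*π*a0 ≤ 4 + 2*π*ε := by
    have : (∫ θ in (0:ℝ)..(2*π), (|Real.cos θ| + ε)) = 4 + 2*π*ε := by
      rw [intervalIntegral.integral_add (habs_cont.intervalIntegrable _ _)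
        intervalIntegrable_const, int_abs_cos]
      simp
    rw [← hgint, ← this]
    apply intervalIntegral.integral_mono_on (by positivity)
      (hgcont.intervalIntegrable _ _)
      ((habs_cont.add continuous_const).intervalIntegrable _ _)
    intro θ _
    exact hg_ub θ
  have ha0_lb : 2/π ≤ a0 := by
    rw [div_le_iff₀ pi_pos]
    nlinarith [h4]
  have ha0_ub : a0 ≤ 2/π + ε := by
    have : π * a0 ≤ 2 + π * ε := by nlinarith [h4']
    have h2 : a0 ≤ (2 + π*ε)/π := by
      rw [le_div_iff₀ pi_pos]; nlinarith [this]
    calc a0 ≤ (2 + π*ε)/π := h2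
      _ = 2/π + ε := by field_simp
  have ha0_pos : 0 < a0 := lt_of_lt_of_le (by positivity) ha0_lb
  refine ⟨1/a0, ?_, ?_⟩
  · -- membership
    refine ⟨(c.support.erase 0).image (fun m => 2*m), ?_, fun k => c (k/2) / a0, ?_⟩
    · intro k hk
      simp only [Finset.coe_image, Set.mem_image, Finset.mem_coe, Finset.mem_erase] at hk
      obtain ⟨m, ⟨hm0, _⟩, rfl⟩ := hk
      exact ⟨by omega, ⟨m, by omega⟩⟩
    · intro t
      have hinj : Set.InjOn (fun m => 2*m) ↑(c.support.erase 0) := fun a _ b _ h => by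
        dsimp at h; omega
      rw [Finset.sum_image hinj]
      have hterm' : ∀ m ∈ c.support.erase 0,
          c (2*m/2) / a0 * Real.cos (2 * π * (↑(2*m)) * t)
            = (c m / a0) * Real.cos (2*m*(2*π*t)) := by
        intro m _
        congr 2
        · congr 1; omega
        · push_cast; ring
      rw [Finset.sum_congr rfl hterm']
      have hsplit : (∑ m ∈ c.support, c m * Real.cos (2*m*(2*π*t)))
          = c 0 + ∑ m ∈ c.support.erase 0, c m * Real.cos (2*m*(2*π*t)) := by
        by_cases h0 : 0 ∈ c.support
        · rw [← Finset.add_sum_erase _ _ h0]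
          norm_num
        · rw [Finset.erase_eq_of_notMem h0, Finsupp.notMem_support_iff.mp h0, zero_add]
      have hpos : 0 ≤ Real.cos (2*π*t) + g (2*π*t) := by
        have := hg_lb (2*π*t)
        have := neg_abs_le (Real.cos (2*π*t))
        linarith
      have hfac : ∑ m ∈ c.support.erase 0, (c m / a0) * Real.cos (2*m*(2*π*t))
          = (1/a0) * ∑ m ∈ c.support.erase 0, c m * Real.cos (2*m*(2*π*t)) := by
        rw [Finset.mul_sum]
        exact Finset.sum_congr rfl fun m _ => by ring
      have ha0ne : a0 ≠ 0 := ne_of_gt ha0_pos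
      have hrw : 1 + 1/a0 * Real.cos (2*π*t)
            + (1/a0) * ∑ m ∈ c.support.erase 0, c m * Real.cos (2*m*(2*π*t))
          = (1/a0) * (Real.cos (2*π*t) + g (2*π*t)) := by
        simp only [hg]
        rw [hc (2*π*t), hsplit, show c 0 = a0 - ε/2 by rw [ha0]; ring]
        field_simp
        ring
      rw [hfac, hrw]
      exact mul_nonneg (by positivity) hpos
  · exact one_div_le_one_div_of_le ha0_pos ha0_ub

/-- For `H` the set of even integers `≥ 2`, the supremum of `λ` over nonnegative
trigonometric polynomials `1 + λ cos(2πt) + ∑_{k ∈ S} c_k cos(2πkt)` equals `π/2`. -/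
theorem turanM_even :
    sSup {lam : ℝ | ∃ S : Finset ℕ, ↑S ⊆ {k : ℕ | 2 ≤ k ∧ Even k} ∧ ∃ c : ℕ → ℝ,
        ∀ t : ℝ, 0 ≤ 1 + lam * Real.cos (2 * π * t) +
          ∑ k ∈ S, c k * Real.cos (2 * π * k * t)}
      = π / 2 := by
  have pi_pos := Real.pi_pos
  set T := {lam : ℝ | ∃ S : Finset ℕ, ↑S ⊆ {k : ℕ | 2 ≤ k ∧ Even k} ∧ ∃ c : ℕ → ℝ,
      ∀ t : ℝ, 0 ≤ 1 + lam * Real.cos (2 * π * t) +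
        ∑ k ∈ S, c k * Real.cos (2 * π * k * t)} with hT
  have hub : ∀ lam ∈ T, lam ≤ π/2 := by
    rintro lam ⟨S, hS, c, h⟩
    exact turan_upper hS h
  have hbdd : BddAbove T := ⟨π/2, hub⟩
  have hne : T.Nonempty := by
    refine ⟨0, ∅, by simp, 0, fun t => ?_⟩
    simp
  refine le_antisymm (csSup_le hne hub) ?_
  have key : ∀ n : ℕ, 1 / (2/π + 1/(n+1)) ≤ sSup T := by
    intro n
    obtain ⟨lam, hmem, hge⟩ := turan_mem (1/(n+1)) (by positivity)
    exact le_trans hge (le_csSup hbdd hmem)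
  have htend : Filter.Tendsto (fun n : ℕ => 1 / (2/π + 1/(n+1)))
      Filter.atTop (nhds (π/2)) := by
    have h1 : Filter.Tendsto (fun n : ℕ => 2/π + 1/((n:ℝ)+1))
        Filter.atTop (nhds (2/π + 0)) :=
      Filter.Tendsto.const_add _ tendsto_one_div_add_atTop_nhds_zero_nat
    have h2 := h1.inv₀ (by positivity)
    have : (2/π + 0 : ℝ)⁻¹ = π/2 := by
      rw [add_zero]
      field_simp
    rw [this] at h2
    simpa [one_div] using h2
  exact le_of_tendsto htend (Filter.Eventually.of_forall key)
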